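/- Let β_t be the curve of length L(β_t) = (ℓ+t)/(2 sin(Y_{c₅}(ℓ+t))) (the length of the constant-distance circle at distance (w/2 − c₅) from the central geodesic in the collar around a geodesic of length ℓ+t). Then |d/dt L(β_t)|_{t=0}| = |(sin Y_{c₅}(ℓ) − ℓ Y_{c₅}′(ℓ) cos Y_{c₅}(ℓ)) / (2 sin² Y_{c₅}(ℓ))| ≤ C ℓ for all ℓ ∈ (0, L̄], C depending only on c₅ and L̄. -/

import Mathlib

open Real

/-- `Y_c(ℓ) = 2 arctan(e^c tan(½ arctan(sinh(ℓ/2))))`. -/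
noncomputable def Ycurve (c ℓ : ℝ) : ℝ :=
  2 * Real.arctan (Real.exp c * Real.tan (Real.arctan (Real.sinh (ℓ / 2)) / 2))


lemma tanh_hasDerivAt (x : ℝ) : HasDerivAt Real.tanh (1 - Real.tanh x ^ 2) x := by
  have h : HasDerivAt (fun y => Real.sinh y / Real.cosh y)
      ((Real.cosh x * Real.cosh x - Real.sinh x * Real.sinh x) / Real.cosh x ^ 2) x :=
    (Real.hasDerivAt_sinh x).div (Real.hasDerivAt_cosh x) (Real.cosh_pos x).ne'
  have heq : (fun y => Real.sinh y / Real.cosh y) = Real.tanh := by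
    funext y; rw [Real.tanh_eq_sinh_div_cosh]
  rw [heq] at h
  convert h using 1
  rw [Real.tanh_eq_sinh_div_cosh]
  have hc := (Real.cosh_pos x).ne'
  field_simp

lemma tanh_nonneg {x : ℝ} (hx : 0 ≤ x) : 0 ≤ Real.tanh x := by
  rw [Real.tanh_eq_sinh_div_cosh]
  exact div_nonneg (by rwa [Real.sinh_nonneg_iff]) (Real.cosh_pos x).le

lemma tanh_le_self {x : ℝ} (hx : 0 ≤ x) : Real.tanh x ≤ x := by
  rw [Real.tanh_eq_sinh_div_cosh, div_le_iff₀ (Real.cosh_pos x)]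
  -- sinh x ≤ x * cosh x
  have key : ∀ y ∈ Set.Ici (0:ℝ), Real.sinh y ≤ y * Real.cosh y := by
    have hmono : MonotoneOn (fun y => y * Real.cosh y - Real.sinh y) (Set.Ici (0:ℝ)) := by
      apply monotoneOn_of_deriv_nonneg (convex_Ici 0)
      · exact (Continuous.mul continuous_id Real.continuous_cosh).sub
          Real.continuous_sinh |>.continuousOn
      · intro y hy
        exact (((hasDerivAt_id y).mul (Real.hasDerivAt_cosh y)).sub
          (Real.hasDerivAt_sinh y)).differentiableAt.differentiableWithinAt
      · intro y hy
        have hd : HasDerivAt (fun y => y * Real.cosh y - Real.sinh y)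
            (1 * Real.cosh y + y * Real.sinh y - Real.cosh y) y :=
          ((hasDerivAt_id y).mul (Real.hasDerivAt_cosh y)).sub (Real.hasDerivAt_sinh y)
        rw [hd.deriv]
        have hy0 : 0 < y := by simpa using hy
        have := Real.sinh_nonneg_iff.mpr hy0.le
        nlinarith
    intro y hy
    have := hmono (Set.self_mem_Ici) hy (by simpa using hy)
    simpa using this
  rcases eq_or_lt_of_le hx with h | h
  · simp [← h]
  · have := key x (Set.mem_Ici.mpr hx); linarith

lemma self_sub_tanh_le_cube {x : ℝ} (hx : 0 ≤ x) : x - Real.tanh x ≤ x ^ 3 := by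
  have key : ∀ y ∈ Set.Ici (0:ℝ), 0 ≤ y ^ 3 + Real.tanh y - y := by
    have hmono : MonotoneOn (fun y => y ^ 3 + Real.tanh y - y) (Set.Ici (0:ℝ)) := by
      apply monotoneOn_of_deriv_nonneg (convex_Ici 0)
      · have hcont : Continuous Real.tanh := by
          have : Real.tanh = fun y => Real.sinh y / Real.cosh y := by
            funext y; rw [Real.tanh_eq_sinh_div_cosh]
          rw [this]
          exact Real.continuous_sinh.div Real.continuous_cosh fun y => (Real.cosh_pos y).ne'
        exact ((continuous_pow 3).add hcont |>.sub continuous_id).continuousOn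
      · intro y hy
        have h1 : HasDerivAt (fun y : ℝ => y ^ 3) (3 * y ^ 2) y := by
          simpa using hasDerivAt_pow 3 y
        exact ((h1.add (tanh_hasDerivAt y)).sub
          (hasDerivAt_id y)).differentiableAt.differentiableWithinAt
      · intro y hy
        have hy0 : 0 < y := by simpa using hy
        have hd : HasDerivAt (fun y => y ^ 3 + Real.tanh y - y)
            (3 * y ^ 2 + (1 - Real.tanh y ^ 2) - 1) y := by
          have h1 : HasDerivAt (fun y : ℝ => y ^ 3) (3 * y ^ 2) y := by
            simpa using hasDerivAt_pow 3 y
          exact (h1.add (tanh_hasDerivAt y)).sub (hasDerivAt_id y)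
        rw [hd.deriv]
        have h1 := tanh_le_self hy0.le
        have h2 := tanh_nonneg hy0.le
        nlinarith
    intro y hy
    have := hmono (Set.self_mem_Ici) hy (by simpa using hy)
    simpa [Real.tanh_zero] using this
  have := key x (Set.mem_Ici.mpr hx)
  linarith

lemma tanh_lt_one (x : ℝ) : Real.tanh x < 1 := by
  rw [Real.tanh_eq_sinh_div_cosh, div_lt_one (Real.cosh_pos x)]
  nlinarith [Real.cosh_sub_sinh x, Real.exp_pos (-x)]

lemma neg_one_lt_tanh (x : ℝ) : -1 < Real.tanh x := by
  rw [Real.tanh_eq_sinh_div_cosh, lt_div_iff₀ (Real.cosh_pos x)]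
  nlinarith [Real.cosh_add_sinh x, Real.exp_pos x]

/-- The key identity: `Ycurve c ℓ = 2 arctan (e^c * tanh (ℓ/4))`. -/
lemma Ycurve_eq (c ℓ : ℝ) : Ycurve c ℓ = 2 * Real.arctan (Real.exp c * Real.tanh (ℓ / 4)) := by
  unfold Ycurve
  congr 2
  -- tan (arctan (sinh (ℓ/2)) / 2) = tanh (ℓ/4)
  have ht1 : Real.tanh (ℓ/4) < 1 := _root_.tanh_lt_one _
  have ht2 : -1 < Real.tanh (ℓ/4) := _root_.neg_one_lt_tanh _
  have hθ1 : Real.arctan (Real.tanh (ℓ/4)) < π/4 := by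
    have := Real.arctan_strictMono ht1
    rwa [Real.arctan_one] at this
  have hθ2 : -(π/4) < Real.arctan (Real.tanh (ℓ/4)) := by
    have := Real.arctan_strictMono ht2
    rwa [Real.arctan_neg, Real.arctan_one] at this
  have harctan : Real.arctan (Real.sinh (ℓ/2)) = 2 * Real.arctan (Real.tanh (ℓ/4)) := by
    have htan : Real.tan (2 * Real.arctan (Real.tanh (ℓ/4))) = Real.sinh (ℓ/2) := by
      rw [Real.tan_two_mul, Real.tan_arctan]
      have hs : Real.sinh (ℓ/2) = 2 * Real.sinh (ℓ/4) * Real.cosh (ℓ/4) := by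
        have : ℓ/2 = ℓ/4 + ℓ/4 := by ring
        rw [this, Real.sinh_add]; ring
      rw [Real.tanh_eq_sinh_div_cosh, hs]
      have hc := (Real.cosh_pos (ℓ/4)).ne'
      have hsq := Real.cosh_sq_sub_sinh_sq (ℓ/4)
      field_simp
      simp [hsq]
    rw [← htan]
    exact Real.arctan_tan (by linarith [Real.pi_pos]) (by linarith [Real.pi_pos])
  rw [harctan]
  have : 2 * Real.arctan (Real.tanh (ℓ/4)) / 2 = Real.arctan (Real.tanh (ℓ/4)) := by ring
  rw [this, Real.tan_arctan]

lemma sin_two_arctan (v : ℝ) : Real.sin (2 * Real.arctan v) = 2 * v / (1 + v ^ 2) := by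
  rw [Real.sin_two_mul, Real.sin_arctan, Real.cos_arctan]
  have h0 : (0:ℝ) < 1 + v ^ 2 := by positivity
  have hs : Real.sqrt (1 + v ^ 2) * Real.sqrt (1 + v ^ 2) = 1 + v ^ 2 :=
    Real.mul_self_sqrt h0.le
  have hsp : 0 < Real.sqrt (1 + v ^ 2) := Real.sqrt_pos.mpr h0
  field_simp
  rw [Real.sq_sqrt h0.le]

lemma cos_two_arctan (v : ℝ) : Real.cos (2 * Real.arctan v) = (1 - v ^ 2) / (1 + v ^ 2) := by
  rw [Real.cos_two_mul, Real.cos_arctan]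
  have h0 : (0:ℝ) < 1 + v ^ 2 := by positivity
  have hs : Real.sqrt (1 + v ^ 2) * Real.sqrt (1 + v ^ 2) = 1 + v ^ 2 :=
    Real.mul_self_sqrt h0.le
  have hsp : 0 < Real.sqrt (1 + v ^ 2) := Real.sqrt_pos.mpr h0
  field_simp
  rw [Real.sq_sqrt h0.le]
  ring

lemma Ynice_hasDerivAt (c ℓ : ℝ) :
    HasDerivAt (fun s => 2 * Real.arctan (Real.exp c * Real.tanh (s / 4)))
      (Real.exp c * (1 - Real.tanh (ℓ/4) ^ 2) /
        (2 * (1 + Real.exp c ^ 2 * Real.tanh (ℓ/4) ^ 2))) ℓ := by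
  have h0 : HasDerivAt (fun s : ℝ => s / 4) (1 / 4) ℓ := by
    simpa using (hasDerivAt_id ℓ).div_const 4
  have h1 : HasDerivAt (fun s : ℝ => Real.tanh (s / 4))
      ((1 - Real.tanh (ℓ/4) ^ 2) * (1/4)) ℓ := HasDerivAt.comp (h₂ := Real.tanh) ℓ (_root_.tanh_hasDerivAt (ℓ/4)) h0
  have h2 : HasDerivAt (fun s : ℝ => Real.exp c * Real.tanh (s / 4))
      (Real.exp c * ((1 - Real.tanh (ℓ/4) ^ 2) * (1/4))) ℓ := h1.const_mul _
  have h3 : HasDerivAt (fun s : ℝ => Real.arctan (Real.exp c * Real.tanh (s / 4)))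
      ((1 / (1 + (Real.exp c * Real.tanh (ℓ/4)) ^ 2)) *
        (Real.exp c * ((1 - Real.tanh (ℓ/4) ^ 2) * (1/4)))) ℓ :=
    (Real.hasDerivAt_arctan _).comp ℓ h2
  have h4 := h3.const_mul (2:ℝ)
  refine h4.congr_deriv ?_
  have hp : (0:ℝ) < 1 + (Real.exp c * Real.tanh (ℓ/4)) ^ 2 := by positivity
  field_simp
  ring

lemma deriv_Ycurve (c ℓ : ℝ) :
    deriv (Ycurve c) ℓ = Real.exp c * (1 - Real.tanh (ℓ/4) ^ 2) /
        (2 * (1 + Real.exp c ^ 2 * Real.tanh (ℓ/4) ^ 2)) := by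
  have : Ycurve c = fun s => 2 * Real.arctan (Real.exp c * Real.tanh (s / 4)) :=
    funext (Ycurve_eq c)
  rw [this]
  exact (Ynice_hasDerivAt c ℓ).deriv


lemma M_abs_bound (k X x u : ℝ) (hk : 0 < k) (hx : 0 < x) (hu0 : 0 < u) (hux : u ≤ x)
    (hcube : x - u ≤ x ^ 3) (hxX : x ≤ X) :
    |u * (1 + k ^ 2 * u ^ 2) - x * (1 - u ^ 2) * (1 - k ^ 2 * u ^ 2)|
      ≤ (2 + 2 * k ^ 2 + k ^ 2 * X ^ 2) * x ^ 3 := by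
  have h2 : u ^ 2 ≤ x ^ 2 := pow_le_pow_left₀ hu0.le hux 2
  have h3 : u ^ 3 ≤ x ^ 3 := pow_le_pow_left₀ hu0.le hux 3
  have h4 : u ^ 4 ≤ x ^ 4 := pow_le_pow_left₀ hu0.le hux 4
  have ha : k ^ 2 * u ^ 3 ≤ k ^ 2 * x ^ 3 := mul_le_mul_of_nonneg_left h3 (sq_nonneg k)
  have hb : x * u ^ 2 ≤ x ^ 3 := by
    calc x * u ^ 2 ≤ x * x ^ 2 := mul_le_mul_of_nonneg_left h2 hx.le
      _ = x ^ 3 := by ring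
  have hc2 : x * (k ^ 2 * u ^ 2) ≤ k ^ 2 * x ^ 3 := by
    calc x * (k ^ 2 * u ^ 2) = k ^ 2 * (x * u ^ 2) := by ring
      _ ≤ k ^ 2 * x ^ 3 := mul_le_mul_of_nonneg_left hb (sq_nonneg k)
  have hd4 : (0:ℝ) ≤ x * (k ^ 2 * u ^ 4) := by positivity
  have he : x * (k ^ 2 * u ^ 4) ≤ k ^ 2 * X ^ 2 * x ^ 3 := by
    have hxx : x ^ 2 ≤ X ^ 2 := pow_le_pow_left₀ hx.le hxX 2
    calc x * (k ^ 2 * u ^ 4) = k ^ 2 * (x * u ^ 4) := by ring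
      _ ≤ k ^ 2 * (x * x ^ 4) :=
          mul_le_mul_of_nonneg_left (mul_le_mul_of_nonneg_left h4 hx.le) (sq_nonneg k)
      _ = k ^ 2 * (x ^ 2 * x ^ 3) := by ring
      _ ≤ k ^ 2 * (X ^ 2 * x ^ 3) := mul_le_mul_of_nonneg_left
          (mul_le_mul_of_nonneg_right hxx (by positivity)) (sq_nonneg k)
      _ = k ^ 2 * X ^ 2 * x ^ 3 := by ring
  have hk2u3 : (0:ℝ) ≤ k ^ 2 * u ^ 3 := by positivity
  have hxu2 : (0:ℝ) ≤ x * u ^ 2 := by positivity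
  have hxku2 : (0:ℝ) ≤ x * (k ^ 2 * u ^ 2) := by positivity
  have hkXx : (0:ℝ) ≤ k ^ 2 * X ^ 2 * x ^ 3 := by positivity
  rw [abs_le]
  constructor
  · nlinarith [hux, hcube, ha, hb, hc2, hd4, he, hk2u3, hxu2, hxku2, hkXx]
  · nlinarith [hux, hcube, ha, hb, hc2, hd4, he, hk2u3, hxu2, hxku2, hkXx]

set_option maxHeartbeats 1000000 in
/-- Let `L(β_t) = (ℓ+t)/(2 sin(Y_{c₅}(ℓ+t)))` be the length of the constant-distance circle in
the collar around a geodesic of length `ℓ+t`. Then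
`|d/dt L(β_t)|_{t=0}| = |(sin Y_{c₅}(ℓ) − ℓ Y_{c₅}′(ℓ) cos Y_{c₅}(ℓ))/(2 sin² Y_{c₅}(ℓ))| ≤ C ℓ`
for all `ℓ ∈ (0, L̄]`, with `C` depending only on `c₅` and `L̄`. -/
theorem boundary_circle_length_variation_bound (c₅ Lbar : ℝ) (hc : 0 < c₅) (hL : 0 < Lbar) :
    ∃ C : ℝ, 0 < C ∧ ∀ ℓ : ℝ, 0 < ℓ → ℓ ≤ Lbar →
      |deriv (fun t => (ℓ + t) / (2 * Real.sin (Ycurve c₅ (ℓ + t)))) 0|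
          = |(Real.sin (Ycurve c₅ ℓ) - ℓ * deriv (Ycurve c₅) ℓ * Real.cos (Ycurve c₅ ℓ))
              / (2 * (Real.sin (Ycurve c₅ ℓ)) ^ 2)| ∧
      |deriv (fun t => (ℓ + t) / (2 * Real.sin (Ycurve c₅ (ℓ + t)))) 0| ≤ C * ℓ := by
  set k := Real.exp c₅ with hk_def
  have hk : 0 < k := Real.exp_pos c₅
  set X : ℝ := Lbar / 4 with hX_def
  have hX : 0 < X := by positivity
  have hch : (1:ℝ) ≤ Real.cosh X := Real.one_le_cosh X
  set A : ℝ := 2 + 2 * k ^ 2 + k ^ 2 * X ^ 2 with hA_def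
  have hA : 0 < A := by positivity
  refine ⟨A * Real.cosh X ^ 2 / (16 * k), by positivity, fun ℓ hℓ hℓL => ?_⟩
  set x : ℝ := ℓ / 4 with hx_def
  have hx : 0 < x := by positivity
  have hxX : x ≤ X := by rw [hx_def, hX_def]; linarith
  set u : ℝ := Real.tanh x with hu_def
  have hu0 : 0 < u := by
    rw [hu_def, Real.tanh_eq_sinh_div_cosh]
    exact div_pos (by rwa [Real.sinh_pos_iff]) (Real.cosh_pos x)
  have hux : u ≤ x := tanh_le_self hx.le
  have hcube : x - u ≤ x ^ 3 := self_sub_tanh_le_cube hx.le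
  have hlb : x ≤ u * Real.cosh X := by
    have h1 : x ≤ Real.sinh x := (Real.self_lt_sinh_iff.mpr hx).le
    have h2 : Real.cosh x ≤ Real.cosh X := by
      rw [Real.cosh_le_cosh, abs_of_pos hx, abs_of_pos hX]; exact hxX
    have h3 : u * Real.cosh x = Real.sinh x := by
      rw [hu_def, Real.tanh_eq_sinh_div_cosh]
      field_simp
    nlinarith [Real.cosh_pos x, hu0]
  -- sin and cos of Y
  have hYeq : ∀ s, Ycurve c₅ s = 2 * Real.arctan (k * Real.tanh (s / 4)) := Ycurve_eq c₅
  have hxℓ : ℓ / 4 = x := hx_def.symm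
  have hsinY : Real.sin (Ycurve c₅ ℓ) = 2 * (k * u) / (1 + (k * u) ^ 2) := by
    rw [hYeq ℓ, hxℓ, sin_two_arctan]
  have hcosY : Real.cos (Ycurve c₅ ℓ) = (1 - (k * u) ^ 2) / (1 + (k * u) ^ 2) := by
    rw [hYeq ℓ, hxℓ, cos_two_arctan]
  have hkupos : 0 < k * u := mul_pos hk hu0
  have hden : (0:ℝ) < 1 + (k * u) ^ 2 := by positivity
  have hsinYpos : 0 < Real.sin (Ycurve c₅ ℓ) := by
    rw [hsinY]; positivity
  -- derivative of Ycurve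
  have hD : deriv (Ycurve c₅) ℓ = k * (1 - u ^ 2) / (2 * (1 + k ^ 2 * u ^ 2)) := by
    rw [deriv_Ycurve, hxℓ]
  set D : ℝ := k * (1 - u ^ 2) / (2 * (1 + k ^ 2 * u ^ 2)) with hD_def
  -- derivative of t ↦ (ℓ+t)/(2 sin Y(ℓ+t)) at 0
  have hadd : HasDerivAt (fun t : ℝ => ℓ + t) 1 0 := by
    simpa using (hasDerivAt_id (0:ℝ)).const_add ℓ
  have hY0 : HasDerivAt (fun t : ℝ => Ycurve c₅ (ℓ + t)) D 0 := by
    have hfun : (fun t : ℝ => Ycurve c₅ (ℓ + t))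
        = (fun s => 2 * Real.arctan (k * Real.tanh (s / 4))) ∘ (fun t : ℝ => ℓ + t) := by
      funext t; simp [hYeq, Function.comp]
    rw [hfun]
    have := (Ynice_hasDerivAt c₅ (ℓ + 0)).comp 0 hadd
    simp only [add_zero] at this
    refine this.congr_deriv ?_
    rw [hD_def, hxℓ]
    ring
  have hsin0 : HasDerivAt (fun t : ℝ => Real.sin (Ycurve c₅ (ℓ + t)))
      (Real.cos (Ycurve c₅ ℓ) * D) 0 := by
    have := (Real.hasDerivAt_sin (Ycurve c₅ (ℓ + 0))).comp 0 hY0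
    simp only [add_zero] at this
    exact this
  have hden0 : HasDerivAt (fun t : ℝ => 2 * Real.sin (Ycurve c₅ (ℓ + t)))
      (2 * (Real.cos (Ycurve c₅ ℓ) * D)) 0 := hsin0.const_mul 2
  have hne : 2 * Real.sin (Ycurve c₅ (ℓ + 0)) ≠ 0 := by
    rw [add_zero]; positivity
  have hdiv := hadd.div hden0 hne
  have hEd : deriv (fun t => (ℓ + t) / (2 * Real.sin (Ycurve c₅ (ℓ + t)))) 0
      = (Real.sin (Ycurve c₅ ℓ) - ℓ * D * Real.cos (Ycurve c₅ ℓ))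
          / (2 * (Real.sin (Ycurve c₅ ℓ)) ^ 2) := by
    rw [show (fun t => (ℓ + t) / (2 * Real.sin (Ycurve c₅ (ℓ + t)))) = (fun t => ℓ + t) / (fun t => 2 * Real.sin (Ycurve c₅ (ℓ + t))) from rfl, hdiv.deriv]
    rw [add_zero] at *
    have hs := hsinYpos.ne'
    field_simp
  constructor
  · rw [hEd, hD]
  · rw [hEd]
    -- rewrite main expression in terms of u, k, x
    have hkey : (Real.sin (Ycurve c₅ ℓ) - ℓ * D * Real.cos (Ycurve c₅ ℓ))
          / (2 * (Real.sin (Ycurve c₅ ℓ)) ^ 2)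
        = (u * (1 + k ^ 2 * u ^ 2) - x * (1 - u ^ 2) * (1 - k ^ 2 * u ^ 2))
            / (4 * k * u ^ 2) := by
      rw [hsinY, hcosY, hD_def]
      have hℓx : ℓ = 4 * x := by rw [hx_def]; ring
      rw [hℓx]
      have h1 : (1:ℝ) + k ^ 2 * u ^ 2 = 1 + (k * u) ^ 2 := by ring
      field_simp
      ring
    rw [hkey]
    set M : ℝ := u * (1 + k ^ 2 * u ^ 2) - x * (1 - u ^ 2) * (1 - k ^ 2 * u ^ 2) with hM_def
    have hdpos : (0:ℝ) < 4 * k * u ^ 2 := by positivity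
    rw [abs_div, abs_of_pos hdpos, div_le_iff₀ hdpos]
    have hMabs : |M| ≤ A * x ^ 3 := by
      rw [hM_def, hA_def]
      exact M_abs_bound k X x u hk hx hu0 hux hcube hxX
    -- A x³ ≤ C ℓ (4 k u²)
    have hfinal : A * x ^ 3 ≤ A * Real.cosh X ^ 2 / (16 * k) * ℓ * (4 * k * u ^ 2) := by
      have heq : A * Real.cosh X ^ 2 / (16 * k) * ℓ * (4 * k * u ^ 2)
          = A * Real.cosh X ^ 2 * x * u ^ 2 := by
        have hℓx : ℓ = 4 * x := by rw [hx_def]; ring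
        rw [hℓx]
        field_simp
        ring
      rw [heq]
      have hsq : x ^ 2 ≤ u ^ 2 * Real.cosh X ^ 2 := by
        calc x ^ 2 ≤ (u * Real.cosh X) ^ 2 := pow_le_pow_left₀ hx.le hlb 2
          _ = u ^ 2 * Real.cosh X ^ 2 := by ring
      have h9 : 0 ≤ A * x * (u ^ 2 * Real.cosh X ^ 2 - x ^ 2) :=
        mul_nonneg (mul_nonneg hA.le hx.le) (by linarith only [hsq])
      nlinarith [h9]
    exact hMabs.trans hfinal
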